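/- arXiv:1008.3145 — 2 statements merged into one kernel-verified Lean document; each statement's English description precedes it below -/
import Mathlib

section
/- The source map s : G_T → X_T is an open map with respect to the logical topologies, and consequently the target map t : G_T → X_T is open as well; thus the topological groupoid G_T ⇉ X_T of T-models and isomorphisms is an open topological groupoid. -/
open FirstOrder FirstOrder.Language Set Topology

universe u v w x

variable {L : FirstOrder.Language.{u, v}} {α : Type w}

/-- A model of `T` whose carrier is a subset of `α`: an element of the set `X_T` of
small models of `T`. -/
structure SmallModel (L : FirstOrder.Language.{u, v}) (α : Type w) (T : L.Theory) where
  carrier : Set α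
  struc : L.Structure carrier
  models : @FirstOrder.Language.Theory.Model L carrier struc T

/-- `M.Sat φ v` means that the formula `φ` is realized in the small model `M`
at the valuation `v`. -/
def SmallModel.Sat {T : L.Theory} (M : SmallModel L α T) {ι : Type*}
    (φ : L.Formula ι) (v : ι → M.carrier) : Prop :=
  letI := M.struc
  φ.Realize v

/-- The basic open set `⟨φ, b⟩ ⊆ X_T`. -/
def XBasic {T : L.Theory} {n : ℕ} (φ : L.Formula (Fin n)) (b : Fin n → α) :
    Set (SmallModel L α T) :=
  {M | ∃ h : ∀ i, b i ∈ M.carrier, M.Sat φ fun i => ⟨b i, h i⟩}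

/-- The logical topology on `X_T`, generated by the sets `⟨φ, b⟩`. -/
instance SmallModel.instTopologicalSpace {T : L.Theory} :
    TopologicalSpace (SmallModel L α T) :=
  TopologicalSpace.generateFrom
    {U | ∃ (n : ℕ) (φ : L.Formula (Fin n)) (b : Fin n → α), U = XBasic φ b}

/-- Isomorphisms of `L`-structures between two small models. -/
abbrev StrEquiv {T : L.Theory} (A B : SmallModel L α T) : Type _ :=
  @FirstOrder.Language.Equiv L A.carrier B.carrier A.struc B.struc

/-- The underlying function of an isomorphism of small models. -/
def StrEquiv.fn {T : L.Theory} {A B : SmallModel L α T} (f : StrEquiv A B) :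
    A.carrier → B.carrier :=
  (@FirstOrder.Language.Equiv.toEquiv L A.carrier B.carrier A.struc B.struc f)

/-- Composition of isomorphisms of small models. -/
def StrEquiv.comp {T : L.Theory} {A B C : SmallModel L α T}
    (g : StrEquiv B C) (f : StrEquiv A B) : StrEquiv A C :=
  letI := A.struc; letI := B.struc; letI := C.struc
  FirstOrder.Language.Equiv.comp g f

/-- An element of `G_T`: a triple `(M, N, f)` with `M, N ∈ X_T` and `f : M ≅ N` an
isomorphism of `L`-structures. -/
structure ModelIso (L : FirstOrder.Language.{u, v}) (α : Type w) (T : L.Theory) where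
  src : SmallModel L α T
  tgt : SmallModel L α T
  iso : StrEquiv src tgt

/-- The basic open set `⟨a ↦ b⟩ ⊆ G_T`. -/
def GMapsTo {T : L.Theory} (a b : α) : Set (ModelIso L α T) :=
  {g | ∃ h : a ∈ g.src.carrier, (StrEquiv.fn g.iso ⟨a, h⟩ : α) = b}

/-- The logical topology on `G_T`, generated by the sets `s⁻¹⟨φ, b⟩`, `t⁻¹⟨φ, b⟩` and
`⟨a ↦ b⟩`. -/
instance ModelIso.instTopologicalSpace {T : L.Theory} :
    TopologicalSpace (ModelIso L α T) :=
  TopologicalSpace.generateFrom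
    ({U | ∃ (n : ℕ) (φ : L.Formula (Fin n)) (b : Fin n → α),
        U = ModelIso.src ⁻¹' XBasic φ b} ∪
     {U | ∃ (n : ℕ) (φ : L.Formula (Fin n)) (b : Fin n → α),
        U = ModelIso.tgt ⁻¹' XBasic φ b} ∪
     {U | ∃ a b : α, U = GMapsTo (T := T) a b})

/-- The identity arrow of `G_T` at a model `M`. -/
def ModelIso.idIso {T : L.Theory} (M : SmallModel L α T) : ModelIso L α T :=
  ⟨M, M, letI := M.struc; FirstOrder.Language.Equiv.refl L M.carrier⟩

/-- The inverse of an arrow of `G_T`. -/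
def ModelIso.invIso {T : L.Theory} (g : ModelIso L α T) : ModelIso L α T :=
  ⟨g.tgt, g.src, letI := g.src.struc; letI := g.tgt.struc;
    FirstOrder.Language.Equiv.symm g.iso⟩


section Aux

variable {T : L.Theory}

/-- The generating sets of the logical topology on `G_T`. -/
def GGens (L : FirstOrder.Language.{u, v}) (α : Type w) (T : L.Theory) :
    Set (Set (ModelIso L α T)) :=
  {U | ∃ (n : ℕ) (φ : L.Formula (Fin n)) (b : Fin n → α),
      U = ModelIso.src ⁻¹' XBasic φ b} ∪
  {U | ∃ (n : ℕ) (φ : L.Formula (Fin n)) (b : Fin n → α),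
      U = ModelIso.tgt ⁻¹' XBasic φ b} ∪
  {U | ∃ a b : α, U = GMapsTo (T := T) a b}

lemma isOpen_XBasic {n : ℕ} (φ : L.Formula (Fin n)) (b : Fin n → α) :
    IsOpen (XBasic (T := T) φ b) :=
  TopologicalSpace.isOpen_generateFrom_of_mem ⟨n, φ, b, rfl⟩

lemma isOpen_GGens {U : Set (ModelIso L α T)} (h : U ∈ GGens L α T) : IsOpen U :=
  TopologicalSpace.isOpen_generateFrom_of_mem h

/-- The underlying isomorphism of `g`, as a total function `α → α`. -/
noncomputable def ModelIso.fval (g : ModelIso L α T) (x : α) : α :=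
  letI := Classical.dec (x ∈ g.src.carrier)
  if h : x ∈ g.src.carrier then (StrEquiv.fn g.iso ⟨x, h⟩ : α) else x

lemma ModelIso.fval_of_mem (g : ModelIso L α T) {x : α} (h : x ∈ g.src.carrier) :
    g.fval x = (StrEquiv.fn g.iso ⟨x, h⟩ : α) := by
  unfold ModelIso.fval
  exact dif_pos h

/-- Transfer of satisfaction along an isomorphism of small models. -/
lemma StrEquiv.sat_iff {A B : SmallModel L α T} (f : StrEquiv A B) {ι : Type x}
    (φ : L.Formula ι) (v : ι → A.carrier) :
    B.Sat φ (fun i => StrEquiv.fn f (v i)) ↔ A.Sat φ v := by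
  letI := A.struc; letI := B.struc
  exact FirstOrder.Language.StrongHomClass.realize_formula f φ

/-- Renaming a small model along a permutation of `α`, as an arrow of `G_T`. -/
noncomputable def rename (M : SmallModel L α T) (π : Equiv.Perm α) : ModelIso L α T := by
  letI := M.struc
  haveI : M.carrier ⊨ T := M.models
  letI hNstr : L.Structure (⇑π '' M.carrier : Set α) :=
    _root_.Equiv.inducedStructure (π.image M.carrier)
  refine { src := M, tgt := ⟨⇑π '' M.carrier, hNstr, ?_⟩,
           iso := _root_.Equiv.inducedStructureEquiv (π.image M.carrier) }
  exact FirstOrder.Language.StrongHomClass.theory_model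
    (_root_.Equiv.inducedStructureEquiv (π.image M.carrier))

@[simp] lemma rename_src (M : SmallModel L α T) (π : Equiv.Perm α) :
    (rename M π).src = M := rfl

@[simp] lemma rename_tgt_carrier (M : SmallModel L α T) (π : Equiv.Perm α) :
    (rename M π).tgt.carrier = ⇑π '' M.carrier := rfl

@[simp] lemma rename_fn (M : SmallModel L α T) (π : Equiv.Perm α) (x : M.carrier) :
    (StrEquiv.fn (rename M π).iso x : α) = π x := rfl

/-- Any injection defined on a finite subset of `β` extends to a permutation of `β`. -/
lemma exists_perm_extend {β : Type x} {s : Set β} (hs : s.Finite) (f : s ↪ β) :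
    ∃ g : Equiv.Perm β, ∀ y : s, g y = f y := by
  cases finite_or_infinite β with
  | inl h => exact Cardinal.extend_function_finite f ⟨Equiv.refl β⟩
  | inr h =>
    haveI := hs.to_subtype
    exact Cardinal.extend_function_of_lt f
      ((Cardinal.lt_aleph0_of_finite _).trans_le (Cardinal.aleph0_le_mk β)) ⟨Equiv.refl β⟩

/-- The key combinatorial lemma: for an arrow `g` in a basic open subset `⋂₀ F` of `G_T`,
there are a finite set `P` of "pinned" points and an open neighbourhood `V` of `g.src`
such that any model in `V`, renamed along any permutation agreeing with `g` on `P`,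
gives an arrow in `⋂₀ F`. -/
lemma key (g : ModelIso L α T) (F : Set (Set (ModelIso L α T))) (hFfin : F.Finite)
    (hFsub : F ⊆ GGens L α T) (hg : g ∈ ⋂₀ F) :
    ∃ P : Set α, P.Finite ∧ P ⊆ g.src.carrier ∧
      ∃ V : Set (SmallModel L α T), IsOpen V ∧ g.src ∈ V ∧
        ∀ M' ∈ V, P ⊆ M'.carrier ∧
          ∀ π : Equiv.Perm α, (∀ x ∈ P, π x = g.fval x) → rename M' π ∈ ⋂₀ F := by
  classical
  revert hFsub hg
  refine Set.Finite.induction_on (motive := fun F _ => F ⊆ GGens L α T → g ∈ ⋂₀ F →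
    ∃ P : Set α, P.Finite ∧ P ⊆ g.src.carrier ∧
      ∃ V : Set (SmallModel L α T), IsOpen V ∧ g.src ∈ V ∧
        ∀ M' ∈ V, P ⊆ M'.carrier ∧
          ∀ π : Equiv.Perm α, (∀ x ∈ P, π x = g.fval x) → rename M' π ∈ ⋂₀ F)
    F hFfin ?_ ?_
  · intro _ _
    exact ⟨∅, Set.finite_empty, by simp, Set.univ, isOpen_univ, trivial,
      fun M' _ => ⟨by simp, fun π _ => by simp⟩⟩
  · rintro W F' - hF'fin IH hsub hmem
    have hgW : g ∈ W := hmem W (Set.mem_insert _ _)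
    have hgF' : g ∈ ⋂₀ F' := fun t ht => hmem t (Set.mem_insert_of_mem _ ht)
    obtain ⟨P, hPfin, hPsub, V, hVopen, hMV, hV⟩ :=
      IH (fun t ht => hsub (Set.mem_insert_of_mem _ ht)) hgF'
    rcases hsub (Set.mem_insert _ _) with (⟨n, φ, b, rfl⟩ | ⟨n, ψ, c, rfl⟩) | ⟨a, b, rfl⟩
    · -- source case
      refine ⟨P, hPfin, hPsub, V ∩ XBasic φ b, hVopen.inter (isOpen_XBasic φ b),
        ⟨hMV, hgW⟩, fun M' hM' => ⟨(hV M' hM'.1).1, fun π hπ => ?_⟩⟩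
      rw [Set.sInter_insert]
      exact ⟨hM'.2, (hV M' hM'.1).2 π hπ⟩
    · -- target case
      obtain ⟨hc, hsat⟩ := hgW
      letI := g.src.struc; letI := g.tgt.struc
      let dd : Fin n → g.src.carrier := fun j => g.iso.toEquiv.symm ⟨c j, hc j⟩
      let d : Fin n → α := fun j => (dd j : α)
      have hfn_dd : ∀ j, StrEquiv.fn g.iso (dd j) = ⟨c j, hc j⟩ := fun j =>
        g.iso.toEquiv.apply_symm_apply _
      have hsrc_sat : g.src ∈ XBasic (T := T) ψ d := by
        refine ⟨fun j => (dd j).2, ?_⟩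
        show g.src.Sat ψ dd
        refine (StrEquiv.sat_iff g.iso ψ dd).1 ?_
        have h2 : (fun i => StrEquiv.fn g.iso (dd i)) =
            fun i => (⟨c i, hc i⟩ : g.tgt.carrier) := funext hfn_dd
        rw [h2]
        exact hsat
      refine ⟨P ∪ Set.range d, hPfin.union (Set.finite_range d),
        Set.union_subset hPsub (Set.range_subset_iff.2 fun j => (dd j).2),
        V ∩ XBasic ψ d, hVopen.inter (isOpen_XBasic ψ d), ⟨hMV, hsrc_sat⟩, ?_⟩
      rintro M' ⟨hM'V, hd', hsat'⟩
      have hdM' : ∀ j, d j ∈ M'.carrier := hd'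
      refine ⟨Set.union_subset (hV M' hM'V).1 (Set.range_subset_iff.2 hdM'),
        fun π hπ => ?_⟩
      have hπd : ∀ j, π (d j) = c j := by
        intro j
        rw [hπ (d j) (Set.mem_union_right _ (Set.mem_range_self j)),
          g.fval_of_mem (dd j).2]
        have h5 : (⟨d j, (dd j).2⟩ : g.src.carrier) = dd j := rfl
        rw [h5, hfn_dd j]
      rw [Set.sInter_insert]
      refine ⟨⟨fun j => ⟨d j, hdM' j, hπd j⟩, ?_⟩, (hV M' hM'V).2 π
        (fun x hx => hπ x (Set.mem_union_left _ hx))⟩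
      have hB := (StrEquiv.sat_iff (rename M' π).iso ψ (fun j => ⟨d j, hdM' j⟩)).2 hsat'
      convert hB using 2
      rename_i j
      exact Subtype.ext (hπd j).symm
    · -- `GMapsTo` case
      obtain ⟨ha, hab⟩ := hgW
      refine ⟨P ∪ {a}, hPfin.union (Set.finite_singleton a),
        Set.union_subset hPsub (by simpa using ha),
        V ∩ XBasic (⊤ : L.Formula (Fin 1)) (fun _ => a),
        hVopen.inter (isOpen_XBasic _ _),
        ⟨hMV, fun _ => ha, by
          letI := g.src.struc
          exact FirstOrder.Language.Formula.realize_top.2 trivial⟩, ?_⟩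
      rintro M' ⟨hM'V, haM', -⟩
      have haM'' : a ∈ M'.carrier := haM' 0
      refine ⟨Set.union_subset (hV M' hM'V).1 (by simpa using haM''), fun π hπ => ?_⟩
      rw [Set.sInter_insert]
      refine ⟨⟨haM'', ?_⟩, (hV M' hM'V).2 π (fun x hx => hπ x (Set.mem_union_left _ hx))⟩
      have h6 : (StrEquiv.fn (rename M' π).iso ⟨a, haM''⟩ : α) = π a := rfl
      rw [h6, hπ a (Set.mem_union_right _ rfl), g.fval_of_mem ha, hab]

lemma isOpenMap_src : IsOpenMap (ModelIso.src : ModelIso L α T → SmallModel L α T) := by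
  classical
  intro U hU
  rw [isOpen_iff_forall_mem_open]
  rintro _ ⟨g, hgU, rfl⟩
  obtain ⟨B, hBmem, hgB, hBU⟩ :=
    (TopologicalSpace.isTopologicalBasis_of_subbasis
      (s := GGens L α T) rfl).exists_subset_of_mem_open hgU hU
  obtain ⟨F, ⟨hFfin, hFsub⟩, rfl⟩ := hBmem
  obtain ⟨P, hPfin, hPsub, V, hVopen, hMV, hV⟩ := key g F hFfin hFsub hgB
  refine ⟨V, ?_, hVopen, hMV⟩
  intro M' hM'
  obtain ⟨hPM', hren⟩ := hV M' hM'
  have hinj : Function.Injective (fun x : P => g.fval x) := by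
    intro x y hxy
    replace hxy : g.fval ↑x = g.fval ↑y := hxy
    rw [g.fval_of_mem (hPsub x.2), g.fval_of_mem (hPsub y.2)] at hxy
    letI := g.src.struc; letI := g.tgt.struc
    have h7 := g.iso.toEquiv.injective (Subtype.ext hxy)
    exact Subtype.ext (Subtype.mk_eq_mk.mp h7)
  obtain ⟨π, hπ⟩ := exists_perm_extend hPfin ⟨fun x : P => g.fval x, hinj⟩
  have hmem := hren π (fun x hx => hπ ⟨x, hx⟩)
  exact ⟨rename M' π, hBU hmem, rfl⟩

lemma invIso_invIso (g : ModelIso L α T) : g.invIso.invIso = g := by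
  cases g with
  | mk s t f =>
    letI := s.struc; letI := t.struc
    exact congrArg (ModelIso.mk s t) (FirstOrder.Language.Equiv.symm_symm f)

lemma invIso_preimage_GMapsTo (a b : α) :
    (ModelIso.invIso ⁻¹' GMapsTo a b : Set (ModelIso L α T)) = GMapsTo b a := by
  ext g
  letI := g.src.struc; letI := g.tgt.struc
  constructor
  · rintro ⟨h, hb⟩
    subst hb
    refine ⟨(g.iso.toEquiv.symm ⟨a, h⟩).2, ?_⟩
    show (g.iso.toEquiv (g.iso.toEquiv.symm ⟨a, h⟩) : α) = a
    rw [Equiv.apply_symm_apply]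
  · rintro ⟨h, hb⟩
    subst hb
    refine ⟨(g.iso.toEquiv ⟨b, h⟩).2, ?_⟩
    show (g.iso.toEquiv.symm (g.iso.toEquiv ⟨b, h⟩) : α) = b
    rw [Equiv.symm_apply_apply]

lemma continuous_invIso : Continuous (ModelIso.invIso : ModelIso L α T → ModelIso L α T) := by
  refine continuous_generateFrom_iff.mpr ?_
  rintro s ((⟨n, φ, b, rfl⟩ | ⟨n, φ, b, rfl⟩) | ⟨a, b, rfl⟩)
  · exact isOpen_GGens (Or.inl (Or.inr ⟨n, φ, b, rfl⟩))
  · exact isOpen_GGens (Or.inl (Or.inl ⟨n, φ, b, rfl⟩))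
  · rw [invIso_preimage_GMapsTo]
    exact isOpen_GGens (Or.inr ⟨b, a, rfl⟩)

end Aux

/-- **`G_T ⇉ X_T` is an open topological groupoid**: the source map (and consequently the
target map) is open with respect to the logical topologies. -/
theorem source_target_open {T : L.Theory} :
    IsOpenMap (ModelIso.src : ModelIso L α T → SmallModel L α T) ∧
      IsOpenMap (ModelIso.tgt : ModelIso L α T → SmallModel L α T) := by
  refine ⟨isOpenMap_src, ?_⟩
  intro U hU
  have h1 : ModelIso.tgt '' U = ModelIso.src '' (ModelIso.invIso '' U) :=
    (Set.image_image ModelIso.src ModelIso.invIso U).symm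
  have h2 : ModelIso.invIso '' U = ModelIso.invIso ⁻¹' U := by
    ext g
    constructor
    · rintro ⟨x, hx, rfl⟩
      show ModelIso.invIso (ModelIso.invIso x) ∈ U
      rw [invIso_invIso]
      exact hx
    · intro hg
      exact ⟨_, hg, invIso_invIso g⟩
  rw [h1, h2]
  exact isOpenMap_src _ (hU.preimage continuous_invIso)
end

section
/- Let φ be an L-formula with n free variables, ψ an L-formula with n+m free variables, and b⃗ ∈ αᵐ a tuple with bᵢ ≠ bⱼ for i ≠ j (reduced form). Let U = ⟨ψ, b⃗⟩ ⊆ ⟦φ⟧ be the corresponding basic open. Then the stabilization of U under the action θ_φ (the set of all θ_φ(f, p) with p ∈ U and f composable) equals the definable subset ⟦ξ⟧ ⊆ ⟦φ⟧, where ξ(x⃗) := ∃y⃗ (φ(x⃗) ∧ ψ(x⃗, y⃗) ∧ ⋀_{i≠j} yᵢ ≠ yⱼ). -/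
open FirstOrder FirstOrder.Language Set Topology

universe u v w x

variable {L : FirstOrder.Language.{u, v}} {α : Type w}

/-- A point of the sheaf `⟦φ⟧`: a model `M ∈ X_T` together with a tuple from its carrier
realizing `φ`. -/
structure SheafPt {L : FirstOrder.Language.{u, v}} {α : Type w} (T : L.Theory)
    {n : ℕ} (φ : L.Formula (Fin n)) where
  model : SmallModel L α T
  elem : Fin n → model.carrier
  sat : model.Sat φ elem

/-- The basic open set `⟨ψ, b⟩ ⊆ ⟦φ⟧`. -/
def sheafBasic {T : L.Theory} {n : ℕ} (φ : L.Formula (Fin n)) {m : ℕ}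
    (ψ : L.Formula (Fin n ⊕ Fin m)) (b : Fin m → α) :
    Set (SheafPt (α := α) T φ) :=
  {p | ∃ h : ∀ i, b i ∈ p.model.carrier,
        p.model.Sat ψ (Sum.elim p.elem fun i => ⟨b i, h i⟩)}

/-- The logical topology on `⟦φ⟧`, generated by the sets `⟨ψ, b⟩`. -/
instance SheafPt.instTopologicalSpace {T : L.Theory} {n : ℕ} (φ : L.Formula (Fin n)) :
    TopologicalSpace (SheafPt (α := α) T φ) :=
  TopologicalSpace.generateFrom
    {U | ∃ (m : ℕ) (ψ : L.Formula (Fin n ⊕ Fin m)) (b : Fin m → α), U = sheafBasic φ ψ b}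

/-- An element of `G_T ×_{X_T} ⟦φ⟧`: an arrow `(M,N,f)` of `G_T` together with a point
`(M, a⃗)` of `⟦φ⟧` lying over its source. -/
structure ActionPt {L : FirstOrder.Language.{u, v}} {α : Type w} (T : L.Theory)
    {n : ℕ} (φ : L.Formula (Fin n)) where
  g : ModelIso L α T
  elem : Fin n → g.src.carrier
  sat : g.src.Sat φ elem

/-- The point of `⟦φ⟧` over the source of the arrow. -/
def ActionPt.pt {T : L.Theory} {n : ℕ} {φ : L.Formula (Fin n)}
    (q : ActionPt (α := α) T φ) : SheafPt (α := α) T φ :=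
  ⟨q.g.src, q.elem, q.sat⟩

/-- `G_T ×_{X_T} ⟦φ⟧` is topologized as a subspace of the product `G_T × ⟦φ⟧`. -/
instance ActionPt.instTopologicalSpace {T : L.Theory} {n : ℕ} {φ : L.Formula (Fin n)} :
    TopologicalSpace (ActionPt (α := α) T φ) :=
  TopologicalSpace.induced (fun q => (q.g, q.pt)) inferInstance

/-- The action `θ_φ : G_T ×_{X_T} ⟦φ⟧ → ⟦φ⟧`, `θ_φ((M,N,f), (M, a⃗)) = (N, f(a⃗))`. -/
def theta {T : L.Theory} {n : ℕ} (φ : L.Formula (Fin n))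
    (q : ActionPt (α := α) T φ) : SheafPt (α := α) T φ where
  model := q.g.tgt
  elem := fun i => StrEquiv.fn q.g.iso (q.elem i)
  sat := by
    letI := q.g.src.struc
    letI := q.g.tgt.struc
    have h := q.sat
    have heq : (fun i => StrEquiv.fn q.g.iso (q.elem i)) = ⇑q.g.iso ∘ q.elem := rfl
    show Formula.Realize (M := q.g.tgt.carrier) φ _
    rw [heq]
    exact (StrongHomClass.realize_formula q.g.iso φ).mpr h

/-- The definable subset `⟦ξ⟧ ⊆ ⟦φ⟧` given by a formula `ξ`. -/
def defSub {T : L.Theory} {n : ℕ} (φ ξ : L.Formula (Fin n)) :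
    Set (SheafPt (α := α) T φ) :=
  {p | p.model.Sat ξ p.elem}

/-- The stabilization of a subset `U ⊆ ⟦φ⟧` under the action `θ_φ`: the set of all
`θ_φ(f, p)` with `p ∈ U` and `f` a composable arrow of `G_T`. -/
def stab {T : L.Theory} {n : ℕ} (φ : L.Formula (Fin n)) (U : Set (SheafPt (α := α) T φ)) :
    Set (SheafPt (α := α) T φ) :=
  {y | ∃ q : ActionPt (α := α) T φ, q.pt ∈ U ∧ theta φ q = y}

/-- The formula `⋀_{i ≠ j} yᵢ ≠ yⱼ` expressing that the last `m` of `n + m` variables are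
pairwise distinct. -/
def distinctInr (L : FirstOrder.Language.{u, v}) (n m : ℕ) : L.Formula (Fin n ⊕ Fin m) :=
  ((List.finRange m) ×ˢ (List.finRange m)).foldr
    (fun p acc =>
      if p.1 = p.2 then acc
      else (∼(Term.equal (Term.var (Sum.inr p.1)) (Term.var (Sum.inr p.2)))) ⊓ acc) ⊤

/-! ### Auxiliary lemmas -/

open Cardinal

lemma realize_foldr_distinct {M : Type x} [L.Structure M] {n m : ℕ}
    (l : List (Fin m × Fin m)) (v : Fin n ⊕ Fin m → M) :
    Formula.Realize (M := M) (l.foldr (fun p acc =>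
      if p.1 = p.2 then acc
      else (∼(Term.equal (Term.var (Sum.inr p.1)) (Term.var (Sum.inr p.2)))) ⊓ acc)
      (⊤ : L.Formula (Fin n ⊕ Fin m))) v ↔
      ∀ p ∈ l, p.1 ≠ p.2 → v (Sum.inr p.1) ≠ v (Sum.inr p.2) := by
  induction l with
  | nil => simp
  | cons p l ih =>
    by_cases h : p.1 = p.2
    · simp only [List.foldr_cons, if_pos h, ih, List.mem_cons]
      constructor
      · rintro H q (rfl | hq)
        · exact fun hne => absurd h hne
        · exact H q hq
      · exact fun H q hq => H q (Or.inr hq)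
    · simp only [List.foldr_cons, if_neg h, List.mem_cons]
      rw [Formula.realize_inf, Formula.realize_not, Formula.realize_equal, ih]
      simp only [Term.realize_var]
      constructor
      · rintro ⟨h1, H⟩ q (rfl | hq)
        · exact fun _ => h1
        · exact H q hq
      · exact fun H => ⟨H p (Or.inl rfl) h, fun q hq => H q (Or.inr hq)⟩

lemma realize_distinctInr {M : Type x} [L.Structure M] {n m : ℕ}
    (v : Fin n ⊕ Fin m → M) :
    (distinctInr L n m).Realize v ↔
      ∀ i j : Fin m, i ≠ j → v (Sum.inr i) ≠ v (Sum.inr j) := by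
  rw [distinctInr, realize_foldr_distinct]
  constructor
  · intro H i j hij
    exact H (i, j) (by simp [List.mem_product]) hij
  · rintro H ⟨i, j⟩ _ hij
    exact H i j hij

lemma exists_perm_map {m : ℕ} (c b : Fin m → α) (hc : Function.Injective c)
    (hb : Function.Injective b) : ∃ σ : Equiv.Perm α, ∀ i, σ (c i) = b i := by
  classical
  let f : (Set.range c : Set α) ↪ α :=
    ⟨fun x => b ((Equiv.ofInjective c hc).symm x), fun x y hxy =>
      (Equiv.ofInjective c hc).symm.injective (hb hxy)⟩
  have hrange : Set.range f = Set.range b := by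
    ext x
    constructor
    · rintro ⟨y, rfl⟩; exact ⟨_, rfl⟩
    · rintro ⟨i, rfl⟩
      exact ⟨Equiv.ofInjective c hc i, congrArg b ((Equiv.ofInjective c hc).symm_apply_apply i)⟩
  have hcard : #((Set.range c : Set α)ᶜ : Set α) = #((Set.range f : Set α)ᶜ : Set α) := by
    rw [hrange]
    have hcb : #(Set.range c : Set α) = #(Set.range b : Set α) :=
      Cardinal.mk_congr ((Equiv.ofInjective c hc).symm.trans (Equiv.ofInjective b hb))
    cases finite_or_infinite α with
    | inl h => exact Cardinal.mk_compl_eq_mk_compl_finite_same hcb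
    | inr h =>
      have h1 : #(Set.range c : Set α) < #α := by
        refine lt_of_lt_of_le ?_ (Cardinal.infinite_iff.mp h)
        exact (Set.finite_range c).lt_aleph0
      have h2 : #(Set.range b : Set α) < #α := by
        refine lt_of_lt_of_le ?_ (Cardinal.infinite_iff.mp h)
        exact (Set.finite_range b).lt_aleph0
      rw [Cardinal.mk_compl_of_infinite _ h1, Cardinal.mk_compl_of_infinite _ h2]
  obtain ⟨g, hg⟩ := Cardinal.extend_function f (Cardinal.eq.mp hcard)
  refine ⟨g, fun i => ?_⟩
  have := hg ⟨c i, ⟨i, rfl⟩⟩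
  rw [this]
  exact congrArg b ((Equiv.ofInjective c hc).symm_apply_apply i)

lemma SheafPt.ext' {T : L.Theory} {n : ℕ} {φ : L.Formula (Fin n)}
    {p q : SheafPt (α := α) T φ} (h1 : p.model = q.model)
    (h2 : ∀ k, (p.elem k : α) = (q.elem k : α)) : p = q := by
  obtain ⟨Mp, ep, sp⟩ := p
  obtain ⟨Mq, eq', sq⟩ := q
  cases h1
  have : ep = eq' := funext fun k => Subtype.ext (h2 k)
  cases this
  rfl

/-- **The stabilization of a basic open is definable**: for a basic open
`U = ⟨ψ, b⃗⟩ ⊆ ⟦φ⟧` in reduced form, the closure of `U` under the action `θ_φ` is the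
definable subset `⟦ξ⟧` for `ξ(x⃗) := ∃y⃗ (φ(x⃗) ∧ ψ(x⃗,y⃗) ∧ ⋀_{i≠j} yᵢ ≠ yⱼ)`. -/
theorem stab_sheafBasic_eq_defSub {T : L.Theory} {n m : ℕ} (φ : L.Formula (Fin n))
    (ψ : L.Formula (Fin n ⊕ Fin m)) (b : Fin m → α) (hb : Function.Injective b) :
    stab (α := α) (T := T) φ (sheafBasic φ ψ b) =
      defSub (α := α) φ
        (Formula.iExs (Fin m) (((φ.relabel Sum.inl) ⊓ ψ) ⊓ distinctInr L n m)) := by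
  classical
  ext p
  constructor
  · rintro ⟨q, ⟨hbmem, hψ⟩, rfl⟩
    letI := q.g.src.struc
    letI := q.g.tgt.struc
    show Formula.Realize (M := q.g.tgt.carrier) _ (theta φ q).elem
    refine (Formula.realize_iExs (M := q.g.tgt.carrier)).mpr ?_
    refine ⟨fun j => StrEquiv.fn q.g.iso ⟨b j, hbmem j⟩, ?_⟩
    have hv : (Sum.elim (theta φ q).elem
        (fun j => StrEquiv.fn q.g.iso ⟨b j, hbmem j⟩) : Fin n ⊕ Fin m → q.g.tgt.carrier) =
        ⇑q.g.iso ∘ Sum.elim q.elem (fun j => ⟨b j, hbmem j⟩) := by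
      funext a
      cases a <;> rfl
    show @Formula.Realize L q.g.tgt.carrier q.g.tgt.struc _ (((φ.relabel Sum.inl) ⊓ ψ) ⊓ distinctInr L n m)
      (Sum.elim (theta φ q).elem (fun j => StrEquiv.fn q.g.iso ⟨b j, hbmem j⟩) : Fin n ⊕ Fin m → q.g.tgt.carrier)
    rw [hv, Formula.realize_inf, Formula.realize_inf]
    refine ⟨⟨?_, ?_⟩, ?_⟩
    · rw [Formula.realize_relabel]
      have : (⇑q.g.iso ∘ Sum.elim q.elem (fun j => ⟨b j, hbmem j⟩)) ∘ Sum.inl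
          = ⇑q.g.iso ∘ q.elem := rfl
      rw [this]
      exact (StrongHomClass.realize_formula q.g.iso φ).mpr q.sat
    · exact (StrongHomClass.realize_formula q.g.iso ψ).mpr hψ
    · rw [realize_distinctInr]
      intro i j hij hEq
      apply hij
      apply hb
      have h2 := q.g.iso.injective hEq
      exact congrArg Subtype.val h2
  · intro hp
    letI := p.model.struc
    haveI : (p.model.carrier : Set α) ⊨ T := p.model.models
    have hp' : Formula.Realize (M := p.model.carrier)
        (Formula.iExs (Fin m) (((φ.relabel Sum.inl) ⊓ ψ) ⊓ distinctInr L n m)) p.elem := hp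
    rw [Formula.realize_iExs] at hp'
    obtain ⟨w, hw⟩ := hp'
    have hv : (fun a => Sum.elim p.elem w (id a)) = Sum.elim p.elem w := rfl
    rw [Formula.realize_inf, Formula.realize_inf, realize_distinctInr] at hw
    obtain ⟨⟨hφw, hψw⟩, hdw⟩ := hw
    have hcinj : Function.Injective (fun j => (w j : α)) := by
      intro j k h
      by_contra hjk
      exact hdw j k hjk (Subtype.ext h)
    obtain ⟨σ, hσ⟩ := exists_perm_map (fun j => (w j : α)) b hcinj hb
    let e : (p.model.carrier : Set α) ≃ (σ '' p.model.carrier : Set α) :=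
      σ.image p.model.carrier
    letI strucA' : L.Structure (σ '' p.model.carrier : Set α) := Equiv.inducedStructure e
    have hmod : @Theory.Model L (σ '' p.model.carrier : Set α) strucA' T :=
      StrongHomClass.theory_model (Equiv.inducedStructureEquiv e)
    let M' : SmallModel L α T := ⟨σ '' p.model.carrier, strucA', hmod⟩
    let F : StrEquiv M' p.model := Language.Equiv.symm (Equiv.inducedStructureEquiv e)
    have hFe : ∀ x : (p.model.carrier : Set α), StrEquiv.fn F (e x) = x := fun x => by
      show e.symm (e x) = x
      exact e.symm_apply_apply x
    have hbmem : ∀ j, b j ∈ M'.carrier := fun j => ⟨(w j : α), (w j).2, hσ j⟩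
    have hEb : ∀ j, e (w j) = (⟨b j, hbmem j⟩ : M'.carrier) := fun j =>
      Subtype.ext (hσ j)
    refine ⟨⟨⟨M', p.model, F⟩, fun k => e (p.elem k), ?_⟩, ⟨hbmem, ?_⟩, ?_⟩
    · show Formula.Realize (M := (σ '' p.model.carrier : Set α)) φ _
      have h3 : (fun k => e (p.elem k)) = ⇑(Equiv.inducedStructureEquiv (L := L) e) ∘ p.elem := rfl
      rw [h3]
      exact (StrongHomClass.realize_formula _ φ).mpr p.sat
    · show Formula.Realize (M := (σ '' p.model.carrier : Set α)) ψ
        (Sum.elim (fun k => e (p.elem k)) (fun j => (⟨b j, hbmem j⟩ : M'.carrier)))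
      have hveq : (Sum.elim (fun k => e (p.elem k))
            (fun j => (⟨b j, hbmem j⟩ : M'.carrier)))
          = ⇑(Equiv.inducedStructureEquiv (L := L) e) ∘ Sum.elim p.elem w := by
        funext a
        cases a with
        | inl k => rfl
        | inr j => exact (hEb j).symm
      rw [hveq]
      exact (StrongHomClass.realize_formula _ ψ).mpr hψw
    · refine SheafPt.ext' ?_ ?_
      · rfl
      · intro k
        show (StrEquiv.fn F (e (p.elem k)) : α) = (p.elem k : α)
        rw [hFe (p.elem k)]
end
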